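/- Let (X,d) be a metric space with dim_H(X) < ∞. Then H_loc(A) ≤ λ_loc(A) ≤ 4^{dim_H(X)} · H_loc(A) for every Borel set A; in particular the local Hausdorff measure H_loc and the local open spherical measure λ_loc are strongly equivalent. -/

import Mathlib

/- STATEMENT 3: Let (X,d) be a metric space with dim_H(X) < ∞. Then
   H_loc(A) ≤ λ_loc(A) ≤ 4^{dim_H(X)} · H_loc(A) for every Borel set A, where H_loc is
   the local Hausdorff measure (Carathéodory construction with τ(U) = diam(U)^{dim_H U})
   and λ_loc is the local open spherical measure (same τ but only covers by open balls).
   In particular H_loc ≍ λ_loc. -/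

open MeasureTheory Metric
open scoped ENNReal

/-- The local Hausdorff measure: Carathéodory construction with
`τ(U) = diam(U)^{dim_H U}`. (Since `dim_H U ≤ dim_H X < ∞` under the hypotheses below,
the real exponent `(dimH U).toReal` is the Hausdorff dimension of `U`.) -/
noncomputable def locHausdorffMeasure (X : Type*) [MetricSpace X] [MeasurableSpace X]
    [BorelSpace X] : Measure X :=
  Measure.mkMetric' (fun U => EMetric.diam U ^ (dimH U).toReal)

/-- The local open spherical measure: as `locHausdorffMeasure` but allowing only covers
by open balls. -/
noncomputable def locSphericalMeasure (X : Type*) [MetricSpace X] [MeasurableSpace X]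
    [BorelSpace X] : Measure X :=
  Measure.mkMetric' (fun U =>
    ⨅ (x : X) (ρ : ℝ) (_ : U = Metric.ball x ρ), EMetric.diam U ^ (dimH U).toReal)

section Aux

variable {X : Type*} [MetricSpace X]

private lemma mkMetric'_mono_gauge {m₁ m₂ : Set X → ℝ≥0∞} (h : ∀ t, m₁ t ≤ m₂ t) :
    MeasureTheory.OuterMeasure.mkMetric' m₁ ≤ MeasureTheory.OuterMeasure.mkMetric' m₂ :=
  iSup₂_mono fun r _ => OuterMeasure.mkMetric'.le_pre.2 fun t ht =>
    (OuterMeasure.mkMetric'.pre_le ht).trans (h t)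

private lemma key_outer (hfin : dimH (Set.univ : Set X) ≠ ⊤) (s : Set X) :
    MeasureTheory.OuterMeasure.mkMetric' (fun U : Set X =>
        ⨅ (x : X) (ρ : ℝ) (_ : U = Metric.ball x ρ), EMetric.diam U ^ (dimH U).toReal) s ≤
      (4 : ℝ≥0∞) ^ (dimH (Set.univ : Set X)).toReal *
        MeasureTheory.OuterMeasure.mkMetric'
          (fun U : Set X => EMetric.diam U ^ (dimH U).toReal) s := by
  set m₁ : Set X → ℝ≥0∞ := fun U => EMetric.diam U ^ (dimH U).toReal with hm₁
  set m₂ : Set X → ℝ≥0∞ := fun U =>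
    ⨅ (x : X) (ρ : ℝ) (_ : U = Metric.ball x ρ), EMetric.diam U ^ (dimH U).toReal with hm₂
  set D : ℝ := (dimH (Set.univ : Set X)).toReal with hD
  set c : ℝ≥0∞ := (4 : ℝ≥0∞) ^ D with hc
  have hD0 : 0 ≤ D := ENNReal.toReal_nonneg
  have hc_top : c ≠ ⊤ := ENNReal.rpow_ne_top_of_nonneg hD0 (by norm_num)
  have hc0 : c ≠ 0 := (ENNReal.rpow_pos (by norm_num) (by norm_num)).ne'
  have hc1 : (1 : ℝ≥0∞) ≤ c := by
    calc (1 : ℝ≥0∞) = 1 ^ D := (ENNReal.one_rpow D).symm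
    _ ≤ 4 ^ D := ENNReal.rpow_le_rpow (by norm_num) hD0
  -- core estimate
  have core : ∀ r : ℝ≥0∞, 0 < r → r ≤ 4⁻¹ →
      OuterMeasure.mkMetric'.pre m₂ (5 * r) ≤ c • OuterMeasure.mkMetric'.pre m₁ r := by
    intro r hr0 hr4
    have hrtop : r ≠ ⊤ := (hr4.trans_lt (by norm_num)).ne
    rw [show c • OuterMeasure.mkMetric'.pre m₁ r =
        MeasureTheory.OuterMeasure.boundedBy
          (c • MeasureTheory.extend fun t (_ : EMetric.diam t ≤ r) => m₁ t) from by
      rw [OuterMeasure.mkMetric'.pre, OuterMeasure.smul_boundedBy hc_top]; rfl]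
    refine OuterMeasure.le_boundedBy'.2 fun t ht => ?_
    obtain ⟨x, hx⟩ := ht
    by_cases hdt : EMetric.diam t ≤ r
    · have hrhs : (c • MeasureTheory.extend fun t (_ : EMetric.diam t ≤ r) => m₁ t) t
          = c * m₁ t := by
        simp [MeasureTheory.extend, hdt]
      rw [hrhs]
      by_cases h0 : EMetric.diam t = 0
      · -- degenerate case: t is a (nonempty) subsingleton
        have hsub : Set.Subsingleton t := EMetric.diam_eq_zero_iff.1 h0
        have hm1t : m₁ t = 1 := by
          simp [hm₁, h0, dimH_subsingleton hsub]
        set ρ : ℝ := r.toReal with hρ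
        have hρ0 : 0 < ρ := ENNReal.toReal_pos hr0.ne' hrtop
        have htsub : t ⊆ Metric.ball x ρ := fun y hy => by
          rw [hsub hy hx]; exact Metric.mem_ball_self hρ0
        have hdball : EMetric.diam (Metric.ball x ρ) ≤ 2 * r := by
          rw [← Metric.emetric_ball]
          refine EMetric.diam_ball.trans ?_
          rw [hρ, ENNReal.ofReal_toReal hrtop]
        have h1 : OuterMeasure.mkMetric'.pre m₂ (5 * r) t ≤ m₂ (Metric.ball x ρ) :=
          ((OuterMeasure.mkMetric'.pre m₂ (5 * r)).mono htsub).trans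
            (OuterMeasure.mkMetric'.pre_le (hdball.trans (by
              exact mul_le_mul_left (by norm_num) r)))
        refine h1.trans ?_
        have h2 : m₂ (Metric.ball x ρ) ≤
            EMetric.diam (Metric.ball x ρ) ^ (dimH (Metric.ball x ρ)).toReal :=
          iInf_le_of_le x <| iInf_le_of_le ρ <| iInf_le _ rfl
        refine h2.trans ?_
        have hle1 : EMetric.diam (Metric.ball x ρ) ≤ 1 := by
          refine hdball.trans ?_
          calc (2 : ℝ≥0∞) * r ≤ 4 * 4⁻¹ :=
                mul_le_mul' (by norm_num) hr4
          _ = 1 := ENNReal.mul_inv_cancel (by norm_num) (by norm_num)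
        calc EMetric.diam (Metric.ball x ρ) ^ (dimH (Metric.ball x ρ)).toReal ≤ 1 :=
              ENNReal.rpow_le_one hle1 ENNReal.toReal_nonneg
        _ ≤ c := hc1
        _ = c * m₁ t := by rw [hm1t, mul_one]
      · -- nondegenerate case
        have hdt_top : EMetric.diam t ≠ ⊤ := (hdt.trans_lt (lt_of_le_of_lt hr4 (by norm_num))).ne
        set ρ : ℝ := 2 * (EMetric.diam t).toReal with hρ
        have hdtr : 0 < (EMetric.diam t).toReal := ENNReal.toReal_pos h0 hdt_top
        have htsub : t ⊆ Metric.ball x ρ := fun y hy => by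
          have : dist y x ≤ (EMetric.diam t).toReal := by
            rw [dist_edist]
            exact ENNReal.toReal_mono hdt_top (EMetric.edist_le_diam_of_mem hy hx)
          exact Metric.mem_ball.2 (this.trans_lt (by rw [hρ]; linarith))
        have hofρ : ENNReal.ofReal ρ = 2 * EMetric.diam t := by
          rw [hρ, ENNReal.ofReal_mul (by norm_num), ENNReal.ofReal_toReal hdt_top]
          norm_num
        have hdball : EMetric.diam (Metric.ball x ρ) ≤ 4 * EMetric.diam t := by
          rw [← Metric.emetric_ball]
          refine EMetric.diam_ball.trans ?_
          rw [hofρ, ← mul_assoc]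
          norm_num
        have hd5r : EMetric.diam (Metric.ball x ρ) ≤ 5 * r := by
          refine hdball.trans ?_
          calc (4 : ℝ≥0∞) * EMetric.diam t ≤ 4 * r := mul_le_mul_right hdt 4
          _ ≤ 5 * r := mul_le_mul_left (by norm_num) r
        have h1 : OuterMeasure.mkMetric'.pre m₂ (5 * r) t ≤ m₂ (Metric.ball x ρ) :=
          ((OuterMeasure.mkMetric'.pre m₂ (5 * r)).mono htsub).trans
            (OuterMeasure.mkMetric'.pre_le hd5r)
        have h2 : m₂ (Metric.ball x ρ) ≤
            EMetric.diam (Metric.ball x ρ) ^ (dimH (Metric.ball x ρ)).toReal :=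
          iInf_le_of_le x <| iInf_le_of_le ρ <| iInf_le _ rfl
        have hle1 : EMetric.diam (Metric.ball x ρ) ≤ 1 := by
          refine hdball.trans ?_
          calc (4 : ℝ≥0∞) * EMetric.diam t ≤ 4 * 4⁻¹ := mul_le_mul_right (hdt.trans hr4) 4
          _ = 1 := ENNReal.mul_inv_cancel (by norm_num) (by norm_num)
        have hdimt_top : dimH t ≠ ⊤ :=
          (lt_of_le_of_lt (dimH_mono (Set.subset_univ t)) (lt_top_iff_ne_top.2 hfin)).ne
        have hdim_le : (dimH t).toReal ≤ (dimH (Metric.ball x ρ)).toReal :=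
          ENNReal.toReal_mono
            ((lt_of_le_of_lt (dimH_mono (Set.subset_univ _)) (lt_top_iff_ne_top.2 hfin)).ne)
            (dimH_mono htsub)
        refine h1.trans (h2.trans ?_)
        calc EMetric.diam (Metric.ball x ρ) ^ (dimH (Metric.ball x ρ)).toReal
            ≤ EMetric.diam (Metric.ball x ρ) ^ (dimH t).toReal :=
              ENNReal.rpow_le_rpow_of_exponent_ge hle1 hdim_le
        _ ≤ (4 * EMetric.diam t) ^ (dimH t).toReal :=
              ENNReal.rpow_le_rpow hdball ENNReal.toReal_nonneg
        _ = 4 ^ (dimH t).toReal * EMetric.diam t ^ (dimH t).toReal :=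
              ENNReal.mul_rpow_of_nonneg _ _ ENNReal.toReal_nonneg
        _ ≤ c * m₁ t := by
              refine mul_le_mul' ?_ le_rfl
              exact ENNReal.rpow_le_rpow_of_exponent_le (by norm_num)
                (ENNReal.toReal_mono hfin (dimH_mono (Set.subset_univ t)))
    · -- diam t > r : gauge is ⊤
      have : (c • MeasureTheory.extend fun t (_ : EMetric.diam t ≤ r) => m₁ t) t = ⊤ := by
        simp [MeasureTheory.extend, hdt, hc0]
      rw [this]; exact le_top
  -- passage to the limit
  refine le_of_tendsto (OuterMeasure.mkMetric'.tendsto_pre m₂ s) ?_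
  filter_upwards [self_mem_nhdsWithin] with r' (hr' : 0 < r')
  set r : ℝ≥0∞ := min (r' / 5) 4⁻¹ with hr
  have hr0 : 0 < r := lt_min (ENNReal.div_pos hr'.ne' (by norm_num)) (by norm_num)
  have h5r : 5 * r ≤ r' := by
    calc (5 : ℝ≥0∞) * r ≤ 5 * (r' / 5) := mul_le_mul_right (min_le_left _ _) 5
    _ = r' := ENNReal.mul_div_cancel (by norm_num) (by norm_num)
  calc OuterMeasure.mkMetric'.pre m₂ r' s ≤ OuterMeasure.mkMetric'.pre m₂ (5 * r) s :=
        OuterMeasure.mkMetric'.mono_pre m₂ h5r s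
  _ ≤ (c • OuterMeasure.mkMetric'.pre m₁ r) s := core r hr0 (min_le_right _ _) s
  _ = c * OuterMeasure.mkMetric'.pre m₁ r s := rfl
  _ ≤ c * MeasureTheory.OuterMeasure.mkMetric' m₁ s := by
        exact mul_le_mul' le_rfl
          ((le_iSup₂_of_le r hr0 le_rfl :
            OuterMeasure.mkMetric'.pre m₁ r ≤ MeasureTheory.OuterMeasure.mkMetric' m₁) s)
  
end Aux

theorem statement3 {X : Type*} [MetricSpace X] [MeasurableSpace X] [BorelSpace X]
    (hfin : dimH (Set.univ : Set X) ≠ ⊤) (A : Set X) (hA : MeasurableSet A) :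
    locHausdorffMeasure X A ≤ locSphericalMeasure X A ∧
      locSphericalMeasure X A ≤
        (4 : ℝ≥0∞) ^ (dimH (Set.univ : Set X)).toReal * locHausdorffMeasure X A := by
  have hH : locHausdorffMeasure X A =
      MeasureTheory.OuterMeasure.mkMetric'
        (fun U : Set X => EMetric.diam U ^ (dimH U).toReal) A :=
    toMeasure_apply _ (OuterMeasure.mkMetric'_isMetric _).le_caratheodory hA
  have hS : locSphericalMeasure X A =
      MeasureTheory.OuterMeasure.mkMetric' (fun U : Set X =>
        ⨅ (x : X) (ρ : ℝ) (_ : U = Metric.ball x ρ), EMetric.diam U ^ (dimH U).toReal) A :=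
    toMeasure_apply _ (OuterMeasure.mkMetric'_isMetric _).le_caratheodory hA
  constructor
  · rw [hH, hS]
    exact mkMetric'_mono_gauge (fun t => le_iInf fun x => le_iInf fun ρ => le_iInf fun _ => le_rfl) A
  · rw [hH, hS]
    exact key_outer hfin A
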